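/- For any nonnegative real a, the ratio of heat kernel values at the identity on SU(2) satisfies K_{a*alpha}(1)/K_{alpha}(1) -> a^{-3/2} as alpha -> 0+, where K_alpha(1) = sum_{j in N/2} (2j+1)^2 exp(-alpha j(j+1)). -/

import Mathlib

open Filter MeasureTheory Set

/-- The `SU(2)` heat kernel at the identity, `K_α(1) = ∑_{j ∈ ℕ/2} (2j+1)² e^{-α j(j+1)}`,
parametrized by `n = 2j ∈ ℕ`, so that `2j+1 = n+1` and `j(j+1) = n(n+2)/4`. -/
noncomputable def heatKernelId (α : ℝ) : ℝ :=
  ∑' n : ℕ, ((n : ℝ) + 1) ^ 2 * Real.exp (-α * ((n : ℝ) * ((n : ℝ) + 2)) / 4)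

/-- auxiliary: `g(x) = x² e^{-x²/4}`. -/
noncomputable def hkg (x : ℝ) : ℝ := x ^ 2 * Real.exp (-x ^ 2 / 4)

/-- auxiliary: the derivative of `hkg`. -/
noncomputable def hkgd (x : ℝ) : ℝ := (2 * x - x ^ 3 / 2) * Real.exp (-x ^ 2 / 4)

lemma hkg_continuous : Continuous hkg := by
  unfold hkg; continuity

lemma hkgd_continuous : Continuous hkgd := by
  unfold hkgd; continuity

lemma hkg_hasDerivAt (x : ℝ) : HasDerivAt hkg (hkgd x) x := by
  have h1 : HasDerivAt (fun y : ℝ => -y ^ 2 / 4) (-(2 * x) / 4) x := by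
    simpa using ((hasDerivAt_pow 2 x).neg.div_const 4)
  have h2 := (hasDerivAt_pow 2 x).mul h1.exp
  convert h2 using 1
  · rfl
  · rfl
  · rfl
  unfold hkgd
  ring

lemma hkg_nonneg (x : ℝ) : 0 ≤ hkg x := by unfold hkg; positivity

lemma hkg_summable {t : ℝ} (ht : 0 < t) :
    Summable (fun n : ℕ => hkg (t * ((n : ℝ) + 1))) := by
  set r : ℝ := Real.exp (-t ^ 2 / 4) with hr_def
  have hr : ‖r‖ < 1 := by
    rw [Real.norm_eq_abs, abs_of_pos (Real.exp_pos _)]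
    apply Real.exp_lt_one_iff.2
    nlinarith [sq_nonneg t]
  have hsum := summable_pow_mul_geometric_of_norm_lt_one 2 hr
  have hsum1 : Summable (fun n : ℕ => ((n : ℝ) + 1) ^ 2 * r ^ (n + 1)) := by
    have := (summable_nat_add_iff 1).2 hsum
    exact this.congr fun n => by push_cast; ring
  apply Summable.of_nonneg_of_le (fun n => hkg_nonneg _) _ (hsum1.mul_left (t ^ 2))
  intro n
  have hm : (1 : ℝ) ≤ (n : ℝ) + 1 := by
    have := Nat.cast_nonneg (α := ℝ) n; linarith
  have hexp : Real.exp (-(t * ((n : ℝ) + 1)) ^ 2 / 4) ≤ r ^ (n + 1) := by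
    rw [hr_def, ← Real.exp_nat_mul]
    apply Real.exp_le_exp.2
    have h1 : ((n : ℝ) + 1) ≤ ((n : ℝ) + 1) ^ 2 := by nlinarith
    push_cast
    nlinarith [mul_nonneg (sq_nonneg t) (sub_nonneg.2 h1)]
  calc hkg (t * ((n : ℝ) + 1)) = (t * ((n : ℝ) + 1)) ^ 2 *
        Real.exp (-(t * ((n : ℝ) + 1)) ^ 2 / 4) := rfl
    _ ≤ (t * ((n : ℝ) + 1)) ^ 2 * r ^ (n + 1) := by
        apply mul_le_mul_of_nonneg_left hexp (by positivity)
    _ = t ^ 2 * (((n : ℝ) + 1) ^ 2 * r ^ (n + 1)) := by ring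

/-- auxiliary: the Riemann sum `S(t) = t ∑_{n ≥ 1} g(nt)`. -/
noncomputable def hkS (t : ℝ) : ℝ := t * ∑' n : ℕ, hkg (t * ((n : ℝ) + 1))

/-- auxiliary: `I = ∫_0^∞ g`. -/
noncomputable def hkI : ℝ := ∫ x in Ioi (0 : ℝ), hkg x

/-- auxiliary: `D = ∫_0^∞ |g'|`. -/
noncomputable def hkD : ℝ := ∫ x in Ioi (0 : ℝ), |hkgd x|

lemma hkg_integrableOn : IntegrableOn hkg (Ioi (0 : ℝ)) := by
  have h := integrableOn_rpow_mul_exp_neg_mul_sq (b := 1/4) (by norm_num) (s := 2) (by norm_num)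
  apply h.congr_fun _ measurableSet_Ioi
  intro x hx
  dsimp only
  unfold hkg
  rw [show ((2 : ℝ) : ℝ) = ((2 : ℕ) : ℝ) by norm_num, Real.rpow_natCast,
    show -(1/4 : ℝ) * x ^ 2 = -x ^ 2 / 4 by ring]

lemma hkgd_abs_integrableOn : IntegrableOn (fun x => |hkgd x|) (Ioi (0 : ℝ)) := by
  have h1 := integrableOn_rpow_mul_exp_neg_mul_sq (b := 1/4) (by norm_num) (s := 1) (by norm_num)
  have h3 := integrableOn_rpow_mul_exp_neg_mul_sq (b := 1/4) (by norm_num) (s := 3) (by norm_num)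
  have hmaj : IntegrableOn
      (fun x : ℝ => 2 * (x ^ (1 : ℝ) * Real.exp (-(1/4) * x ^ 2)) +
        (1/2) * (x ^ (3 : ℝ) * Real.exp (-(1/4) * x ^ 2))) (Ioi (0 : ℝ)) :=
    (h1.const_mul 2).add (h3.const_mul (1/2))
  apply hmaj.mono'
  · exact (hkgd_continuous.abs.aestronglyMeasurable).restrict
  · filter_upwards [ae_restrict_mem measurableSet_Ioi] with x hx
    have hx0 : (0 : ℝ) < x := hx
    rw [Real.norm_eq_abs, abs_abs]
    unfold hkgd
    rw [abs_mul, abs_of_pos (Real.exp_pos _)]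
    rw [show (x : ℝ) ^ (1 : ℝ) = x by rw [Real.rpow_one],
        show (x : ℝ) ^ (3 : ℝ) = x ^ (3 : ℕ) by
          rw [show ((3 : ℝ) : ℝ) = ((3 : ℕ) : ℝ) by norm_num, Real.rpow_natCast]]
    have he : Real.exp (-(1/4) * x ^ 2) = Real.exp (-x ^ 2 / 4) := by congr 1; ring
    rw [he]
    have habs : |2 * x - x ^ 3 / 2| ≤ 2 * x + x ^ 3 / 2 := by
      apply abs_sub_le_of_nonneg_of_le <;> nlinarith
    calc |2 * x - x ^ 3 / 2| * Real.exp (-x ^ 2 / 4)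
        ≤ (2 * x + x ^ 3 / 2) * Real.exp (-x ^ 2 / 4) := by
          apply mul_le_mul_of_nonneg_right habs (Real.exp_pos _).le
      _ = 2 * (x * Real.exp (-x ^ 2 / 4)) + 1/2 * (x ^ 3 * Real.exp (-x ^ 2 / 4)) := by ring

lemma hkD_nonneg : 0 ≤ hkD :=
  setIntegral_nonneg measurableSet_Ioi fun x _ => abs_nonneg _

lemma hkI_pos : 0 < hkI := by
  rw [hkI, setIntegral_pos_iff_support_of_nonneg_ae
    (Filter.Eventually.of_forall fun x => hkg_nonneg x) hkg_integrableOn]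
  have hsub : Ioi (0 : ℝ) ⊆ Function.support hkg ∩ Ioi 0 := by
    intro x hx
    refine ⟨?_, hx⟩
    have hx0 : (0 : ℝ) < x := hx
    simp only [Function.mem_support]
    unfold hkg
    positivity
  calc (0 : ENNReal) < volume (Ioi (0 : ℝ)) := by simp [Real.volume_Ioi]
    _ ≤ volume (Function.support hkg ∩ Ioi 0) := measure_mono hsub

lemma hk_interval {t : ℝ} (ht : 0 < t) (n : ℕ) :
    |t * hkg (t * ((n : ℝ) + 1)) - ∫ x in (t * n)..(t * ((n : ℝ) + 1)), hkg x|
      ≤ t * ∫ x in (t * n)..(t * ((n : ℝ) + 1)), |hkgd x| := by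
  set a := t * (n : ℝ) with ha_def
  set b := t * ((n : ℝ) + 1) with hb_def
  have hab : a ≤ b := by
    apply mul_le_mul_of_nonneg_left (by linarith) ht.le
  have hba : b - a = t := by rw [ha_def, hb_def]; ring
  set B := ∫ x in a..b, |hkgd x| with hB_def
  have hgd_int : ∀ c d : ℝ, IntervalIntegrable hkgd volume c d :=
    fun c d => hkgd_continuous.intervalIntegrable c d
  have hkey : ∀ x ∈ Set.uIoc a b, ‖hkg b - hkg x‖ ≤ B := by
    intro x hx
    rw [Set.uIoc_of_le hab] at hx
    obtain ⟨hax, hxb⟩ := hx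
    have hftc : ∫ y in x..b, hkgd y = hkg b - hkg x :=
      intervalIntegral.integral_eq_sub_of_hasDerivAt
        (fun y _ => hkg_hasDerivAt y) (hgd_int x b)
    rw [Real.norm_eq_abs, ← hftc]
    calc |∫ y in x..b, hkgd y| ≤ ∫ y in x..b, |hkgd y| :=
          intervalIntegral.abs_integral_le_integral_abs hxb
      _ ≤ B := by
          apply intervalIntegral.integral_mono_interval hax.le hxb le_rfl
          · exact Filter.Eventually.of_forall fun y => abs_nonneg _
          · exact (hkgd_continuous.abs).intervalIntegrable a b
  have h1 : t * hkg b - ∫ x in a..b, hkg x = ∫ x in a..b, (hkg b - hkg x) := by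
    rw [intervalIntegral.integral_sub (intervalIntegrable_const)
      (hkg_continuous.intervalIntegrable a b)]
    rw [intervalIntegral.integral_const, hba]
    simp [smul_eq_mul]
  rw [h1]
  calc |∫ x in a..b, (hkg b - hkg x)| ≤ B * |b - a| := by
        have := intervalIntegral.norm_integral_le_of_norm_le_const hkey
        rwa [Real.norm_eq_abs] at this
    _ = t * B := by rw [hba, abs_of_pos ht]; ring

lemma hk_partial {t : ℝ} (ht : 0 < t) (N : ℕ) :
    |(∑ n ∈ Finset.range N, t * hkg (t * ((n : ℝ) + 1))) -
      ∫ x in (0 : ℝ)..(t * N), hkg x| ≤ t * hkD := by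
  have hadj : ∑ k ∈ Finset.range N, ∫ x in (t * (k : ℝ))..(t * ((k : ℝ) + 1)), hkg x
      = ∫ x in (0 : ℝ)..(t * N), hkg x := by
    have := intervalIntegral.sum_integral_adjacent_intervals
      (a := fun k : ℕ => t * (k : ℝ)) (f := hkg) (μ := volume) (n := N)
      (fun k _ => hkg_continuous.intervalIntegrable _ _)
    simp only [Nat.cast_zero, mul_zero, Nat.cast_add, Nat.cast_one] at this
    exact this
  have hadj' : ∑ k ∈ Finset.range N, ∫ x in (t * (k : ℝ))..(t * ((k : ℝ) + 1)), |hkgd x|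
      = ∫ x in (0 : ℝ)..(t * N), |hkgd x| := by
    have := intervalIntegral.sum_integral_adjacent_intervals
      (a := fun k : ℕ => t * (k : ℝ)) (f := fun x => |hkgd x|) (μ := volume) (n := N)
      (fun k _ => (hkgd_continuous.abs).intervalIntegrable _ _)
    simp only [Nat.cast_zero, mul_zero, Nat.cast_add, Nat.cast_one] at this
    exact this
  have hD : ∫ x in (0 : ℝ)..(t * N), |hkgd x| ≤ hkD := by
    rw [intervalIntegral.integral_of_le (by positivity), hkD]
    apply setIntegral_mono_set hkgd_abs_integrableOn
    · exact Filter.Eventually.of_forall fun y => abs_nonneg _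
    · exact (Set.Ioc_subset_Ioi_self).eventuallyLE
  calc |(∑ n ∈ Finset.range N, t * hkg (t * ((n : ℝ) + 1))) -
        ∫ x in (0 : ℝ)..(t * N), hkg x|
      = |∑ n ∈ Finset.range N, (t * hkg (t * ((n : ℝ) + 1)) -
          ∫ x in (t * (n : ℝ))..(t * ((n : ℝ) + 1)), hkg x)| := by
        rw [Finset.sum_sub_distrib, hadj]
    _ ≤ ∑ n ∈ Finset.range N, |t * hkg (t * ((n : ℝ) + 1)) -
          ∫ x in (t * (n : ℝ))..(t * ((n : ℝ) + 1)), hkg x| :=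
        Finset.abs_sum_le_sum_abs _ _
    _ ≤ ∑ n ∈ Finset.range N, t * ∫ x in (t * (n : ℝ))..(t * ((n : ℝ) + 1)), |hkgd x| :=
        Finset.sum_le_sum fun n _ => hk_interval ht n
    _ = t * ∫ x in (0 : ℝ)..(t * N), |hkgd x| := by
        rw [← Finset.mul_sum, hadj']
    _ ≤ t * hkD := mul_le_mul_of_nonneg_left hD ht.le

lemma hkS_close {t : ℝ} (ht : 0 < t) : |hkS t - hkI| ≤ t * hkD := by
  have hsum : HasSum (fun n : ℕ => t * hkg (t * ((n : ℝ) + 1))) (hkS t) :=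
    (hkg_summable ht).hasSum.mul_left t
  have htend1 := hsum.tendsto_sum_nat
  have htendN : Tendsto (fun N : ℕ => t * (N : ℝ)) atTop atTop :=
    Tendsto.const_mul_atTop ht tendsto_natCast_atTop_atTop
  have htend2 : Tendsto (fun N : ℕ => ∫ x in (0 : ℝ)..(t * N), hkg x) atTop (nhds hkI) :=
    intervalIntegral_tendsto_integral_Ioi 0 hkg_integrableOn htendN
  have htend : Tendsto (fun N : ℕ =>
      |(∑ n ∈ Finset.range N, t * hkg (t * ((n : ℝ) + 1))) -
        ∫ x in (0 : ℝ)..(t * N), hkg x|) atTop (nhds |hkS t - hkI|) :=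
    (htend1.sub htend2).abs
  exact le_of_tendsto htend (Filter.Eventually.of_forall fun N => hk_partial ht N)

lemma hkS_tendsto : Tendsto hkS (nhdsWithin 0 (Set.Ioi 0)) (nhds hkI) := by
  rw [Metric.tendsto_nhdsWithin_nhds]
  intro ε hε
  refine ⟨ε / (hkD + 1), div_pos hε (by linarith [hkD_nonneg]), fun t ht hd => ?_⟩
  rw [Real.dist_eq, sub_zero] at hd
  have ht0 : (0 : ℝ) < t := ht
  rw [Real.dist_eq]
  have h1 := hkS_close ht0
  have h2 : t * hkD ≤ t * (hkD + 1) := by nlinarith [hkD_nonneg]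
  have h3 : t < ε / (hkD + 1) := by rwa [abs_of_pos ht0] at hd
  have h4 : t * (hkD + 1) < ε := by
    have hD1 : (0 : ℝ) < hkD + 1 := by linarith [hkD_nonneg]
    calc t * (hkD + 1) < (ε / (hkD + 1)) * (hkD + 1) := by
          apply mul_lt_mul_of_pos_right h3 hD1
      _ = ε := by field_simp
  linarith

lemma heatKernel_eq {α : ℝ} (hα : 0 < α) :
    Real.sqrt α ^ 3 * heatKernelId α = Real.exp (α / 4) * hkS (Real.sqrt α) := by
  have h2 : Real.sqrt α ^ 2 = α := Real.sq_sqrt hα.le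
  rw [heatKernelId, ← tsum_mul_left, hkS, ← tsum_mul_left, ← tsum_mul_left]
  refine tsum_congr fun n => ?_
  simp only [hkg]
  have hsq : (Real.sqrt α * ((n : ℝ) + 1)) ^ 2 = α * ((n : ℝ) + 1) ^ 2 := by
    rw [mul_pow, h2]
  rw [hsq]
  have hexp : Real.exp (α / 4) * Real.exp (-(α * ((n : ℝ) + 1) ^ 2) / 4)
      = Real.exp (-α * ((n : ℝ) * ((n : ℝ) + 2)) / 4) := by
    rw [← Real.exp_add]; congr 1; ring
  have h3 : Real.sqrt α ^ 3 = α * Real.sqrt α := by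
    rw [show (3 : ℕ) = 2 + 1 from rfl, pow_succ, h2]
  rw [← hexp, h3]
  ring

/-- For any `a > 0`, the ratio of heat kernel values at the identity on `SU(2)` satisfies
`K_{aα}(1) / K_α(1) → a^{-3/2}` as `α → 0⁺`. -/
theorem stmt5 (a : ℝ) (ha : 0 < a) :
    Tendsto (fun α : ℝ => heatKernelId (a * α) / heatKernelId α)
      (nhdsWithin 0 (Set.Ioi 0)) (nhds (a ^ (-(3 : ℝ) / 2))) := by
  set P : ℝ → ℝ := fun β => Real.exp (β / 4) * hkS (Real.sqrt β) with hP_def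
  have hmul : Tendsto (fun α : ℝ => a * α) (nhdsWithin 0 (Set.Ioi 0))
      (nhdsWithin 0 (Set.Ioi 0)) := by
    rw [tendsto_nhdsWithin_iff]
    constructor
    · have hc : Continuous fun α : ℝ => a * α := continuous_const.mul continuous_id
      have h0 := hc.tendsto (0 : ℝ)
      rw [mul_zero] at h0
      exact h0.mono_left nhdsWithin_le_nhds
    · filter_upwards [self_mem_nhdsWithin] with x hx
      exact mul_pos ha hx
  have hsqrt : Tendsto (fun α : ℝ => Real.sqrt α) (nhdsWithin 0 (Set.Ioi 0))
      (nhdsWithin 0 (Set.Ioi 0)) := by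
    rw [tendsto_nhdsWithin_iff]
    constructor
    · have := Real.continuous_sqrt.tendsto (0 : ℝ)
      rw [Real.sqrt_zero] at this
      exact this.mono_left nhdsWithin_le_nhds
    · filter_upwards [self_mem_nhdsWithin] with x hx
      exact Real.sqrt_pos.2 hx
  have hexp_tend : Tendsto (fun β : ℝ => Real.exp (β / 4)) (nhdsWithin 0 (Set.Ioi 0))
      (nhds 1) := by
    have : Tendsto (fun β : ℝ => Real.exp (β / 4)) (nhds 0) (nhds 1) := by
      have h := (Real.continuous_exp.comp (continuous_id.div_const 4)).tendsto (0 : ℝ)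
      simpa [Function.comp_def] using h
    exact this.mono_left nhdsWithin_le_nhds
  have hP : Tendsto P (nhdsWithin 0 (Set.Ioi 0)) (nhds hkI) := by
    have h := hexp_tend.mul (hkS_tendsto.comp hsqrt)
    rw [one_mul] at h
    exact h
  have hPa : Tendsto (fun α : ℝ => P (a * α)) (nhdsWithin 0 (Set.Ioi 0)) (nhds hkI) :=
    hP.comp hmul
  have hdiv : Tendsto (fun α : ℝ => P (a * α) / P α) (nhdsWithin 0 (Set.Ioi 0))
      (nhds 1) := by
    have h := hPa.div hP hkI_pos.ne'
    rwa [div_self hkI_pos.ne'] at h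
  have hfinal := hdiv.mul_const (a ^ (-(3 : ℝ) / 2))
  rw [one_mul] at hfinal
  apply hfinal.congr'
  filter_upwards [self_mem_nhdsWithin] with α hα
  have hα0 : (0 : ℝ) < α := hα
  have haα : (0 : ℝ) < a * α := mul_pos ha hα0
  have hsα : (0 : ℝ) < Real.sqrt α := Real.sqrt_pos.2 hα0
  have hsa : (0 : ℝ) < Real.sqrt a := Real.sqrt_pos.2 ha
  have hK1 : heatKernelId (a * α) = P (a * α) / Real.sqrt (a * α) ^ 3 := by
    rw [eq_div_iff (by positivity : Real.sqrt (a * α) ^ 3 ≠ 0)]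
    rw [mul_comm (heatKernelId (a * α))]
    exact heatKernel_eq haα
  have hK2 : heatKernelId α = P α / Real.sqrt α ^ 3 := by
    rw [eq_div_iff (by positivity : Real.sqrt α ^ 3 ≠ 0)]
    rw [mul_comm (heatKernelId α)]
    exact heatKernel_eq hα0
  have hc : a ^ (-(3 : ℝ) / 2) = (Real.sqrt a ^ 3)⁻¹ := by
    rw [show (-(3 : ℝ) / 2) = -((3 : ℝ) / 2) by ring, Real.rpow_neg ha.le]
    congr 1
    rw [show ((3 : ℝ) / 2) = (1 / 2 : ℝ) * ((3 : ℕ) : ℝ) by norm_num,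
      Real.rpow_mul ha.le, Real.rpow_natCast, ← Real.sqrt_eq_rpow]
  have hsmul : Real.sqrt (a * α) ^ 3 = Real.sqrt a ^ 3 * Real.sqrt α ^ 3 := by
    rw [Real.sqrt_mul ha.le, mul_pow]
  rw [hK1, hK2, div_div_div_comm, hsmul, hc]
  have hinv : (Real.sqrt a ^ 3)⁻¹
      = Real.sqrt α ^ 3 / (Real.sqrt a ^ 3 * Real.sqrt α ^ 3) := by
    rw [eq_div_iff (by positivity : Real.sqrt a ^ 3 * Real.sqrt α ^ 3 ≠ 0)]
    field_simp
  rw [hinv, mul_div_assoc]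
  rw [show Real.sqrt a ^ 3 * Real.sqrt α ^ 3 / Real.sqrt α ^ 3 = Real.sqrt a ^ 3 from by
      rw [mul_div_assoc, div_self (ne_of_gt (by positivity : (0:ℝ) < Real.sqrt α ^ 3)), mul_one],
    show Real.sqrt α ^ 3 / (Real.sqrt a ^ 3 * Real.sqrt α ^ 3) = (Real.sqrt a ^ 3)⁻¹ from by
      rw [mul_comm, div_mul_eq_div_div,
        div_self (ne_of_gt (by positivity : (0:ℝ) < Real.sqrt α ^ 3)), one_div],
    div_eq_mul_inv]
  exact (div_eq_mul_inv _ _).symm
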